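/- arXiv:1309.7217 — 4 statements merged into one kernel-verified Lean document; each statement's English description precedes it below -/
import Mathlib

section
/- Existence of the critical exponent for inelastic Maxwell molecules (Lemma 3.4): Let δ ∈ (0,1/2) and let ψ be a random variable with values in (0,π) whose law is absolutely continuous with respect to Lebesgue measure. Define r⁻ = 2^{−1/2}(1−δ)√(1−cos ψ) and r⁺ = 2^{−1/2}√((1+δ²)+(1−δ²)cos ψ). Then there exists a unique α ∈ (0,2) such that E[(r⁺)^α + (r⁻)^α] = 1; moreover, for this α and every γ > 1, E[(r⁺)^{αγ} + (r⁻)^{αγ}] < 1. -/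
open MeasureTheory Real Set

/-- Auxiliary: a.e.-positive integrable function on a probability space has positive integral. -/
lemma integral_pos_of_ae_pos {Ω : Type*} [MeasurableSpace Ω] (P : Measure Ω)
    [IsProbabilityMeasure P] {f : Ω → ℝ} (hf : Integrable f P)
    (h : ∀ᵐ ω ∂P, 0 < f ω) : 0 < ∫ ω, f ω ∂P := by
  rw [integral_pos_iff_support_of_nonneg_ae (h.mono fun ω hω => hω.le) hf]
  have h1 : ∀ᵐ ω ∂P, ω ∈ Function.support f := h.mono fun ω hω => ne_of_gt hω
  have h2 : P (Function.support f)ᶜ = 0 := by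
    rw [ae_iff] at h1
    have : {a | a ∉ Function.support f} = (Function.support f)ᶜ := rfl
    rwa [this] at h1
  by_contra hc
  push_neg at hc
  have h3 : P (Function.support f) = 0 := le_antisymm hc zero_le
  have := measure_union_le (μ := P) (Function.support f) (Function.support f)ᶜ
  rw [union_compl_self, h2, h3, measure_univ] at this
  simp at this

/-- **Existence of the critical exponent for inelastic Maxwell molecules.**
Let `δ ∈ (0,1/2)` and `ψ` a random angle in `(0,π)` with absolutely continuous law.
With `r⁻ = 2^{-1/2}(1-δ)√(1-cos ψ)` and `r⁺ = 2^{-1/2}√((1+δ²)+(1-δ²)cos ψ)`,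
there is a unique `α ∈ (0,2)` with `E[(r⁺)^α + (r⁻)^α] = 1`; moreover for this `α`
and every `γ > 1` one has `E[(r⁺)^{αγ} + (r⁻)^{αγ}] < 1`. -/
theorem critical_exponent_inelastic_maxwell
    {Ω : Type*} [MeasurableSpace Ω] (P : Measure Ω) [IsProbabilityMeasure P]
    (δ : ℝ) (hδ : δ ∈ Set.Ioo (0 : ℝ) (1/2))
    (ψ : Ω → ℝ) (hψ_meas : Measurable ψ)
    (hψ_range : ∀ᵐ ω ∂P, ψ ω ∈ Set.Ioo 0 π)
    (hψ_ac : Measure.map ψ P ≪ (volume : Measure ℝ))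
    (rm rp : Ω → ℝ)
    (hrm : ∀ ω, rm ω = (Real.sqrt 2)⁻¹ * (1 - δ) * Real.sqrt (1 - Real.cos (ψ ω)))
    (hrp : ∀ ω, rp ω = (Real.sqrt 2)⁻¹ *
      Real.sqrt ((1 + δ ^ 2) + (1 - δ ^ 2) * Real.cos (ψ ω))) :
    ∃ α : ℝ, α ∈ Set.Ioo (0 : ℝ) 2 ∧
      (∫ ω, (rp ω ^ α + rm ω ^ α) ∂P) = 1 ∧
      (∀ α' : ℝ, α' ∈ Set.Ioo (0 : ℝ) 2 → (∫ ω, (rp ω ^ α' + rm ω ^ α') ∂P) = 1 → α' = α) ∧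
      (∀ γ : ℝ, 1 < γ → (∫ ω, (rp ω ^ (α * γ) + rm ω ^ (α * γ)) ∂P) < 1) := by
  obtain ⟨hδ0, hδ1⟩ := hδ
  have hs2 : (0:ℝ) < Real.sqrt 2 := Real.sqrt_pos.mpr (by norm_num)
  have hs2sq : Real.sqrt 2 * Real.sqrt 2 = 2 := Real.mul_self_sqrt (by norm_num)
  -- measurability of rm, rp
  have hrm_meas : Measurable rm := by
    have : rm = fun ω => (Real.sqrt 2)⁻¹ * (1 - δ) * Real.sqrt (1 - Real.cos (ψ ω)) :=
      funext hrm
    rw [this]; fun_prop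
  have hrp_meas : Measurable rp := by
    have : rp = fun ω => (Real.sqrt 2)⁻¹ *
        Real.sqrt ((1 + δ ^ 2) + (1 - δ ^ 2) * Real.cos (ψ ω)) := funext hrp
    rw [this]; fun_prop
  -- the key a.e. pointwise facts
  have key : ∀ᵐ ω ∂P, (0 < rm ω ∧ rm ω < 1) ∧ (0 < rp ω ∧ rp ω < 1) ∧
      rp ω ^ (2:ℝ) + rm ω ^ (2:ℝ) < 1 := by
    filter_upwards [hψ_range] with ω hω
    set c := Real.cos (ψ ω) with hc
    have hc1 : c < 1 := by
      have := Real.cos_lt_cos_of_nonneg_of_le_pi le_rfl hω.2.le hω.1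
      simpa [hc] using this
    have hc2 : -1 < c := by
      have := Real.cos_lt_cos_of_nonneg_of_le_pi hω.1.le le_rfl hω.2
      simpa [hc] using this
    have hd2 : (0:ℝ) < 1 - δ ^ 2 := by nlinarith
    have hA : (0:ℝ) < (1 + δ ^ 2) + (1 - δ ^ 2) * c := by
      nlinarith [mul_lt_mul_of_pos_left hc2 hd2]
    have hA2 : (1 + δ ^ 2) + (1 - δ ^ 2) * c < 2 := by
      nlinarith [mul_lt_mul_of_pos_left hc1 hd2]
    have h1c : (0:ℝ) < 1 - c := by linarith
    have h1c2 : (1:ℝ) - c < 2 := by linarith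
    have hrmpos : 0 < rm ω := by
      rw [hrm]
      exact mul_pos (mul_pos (inv_pos.mpr hs2) (by linarith)) (Real.sqrt_pos.mpr h1c)
    have hrppos : 0 < rp ω := by
      rw [hrp]
      exact mul_pos (inv_pos.mpr hs2) (Real.sqrt_pos.mpr hA)
    have hrmlt : rm ω < 1 := by
      rw [hrm]
      have h1 : Real.sqrt (1 - c) < Real.sqrt 2 :=
        Real.sqrt_lt_sqrt h1c.le h1c2
      calc (Real.sqrt 2)⁻¹ * (1 - δ) * Real.sqrt (1 - c)
          < (Real.sqrt 2)⁻¹ * 1 * Real.sqrt 2 := by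
            apply mul_lt_mul' _ h1 (Real.sqrt_nonneg _)
              (by positivity)
            apply mul_le_mul_of_nonneg_left (by linarith) (inv_pos.mpr hs2).le
        _ = 1 := by field_simp
    have hrplt : rp ω < 1 := by
      rw [hrp]
      have h1 : Real.sqrt ((1 + δ ^ 2) + (1 - δ ^ 2) * c) < Real.sqrt 2 :=
        Real.sqrt_lt_sqrt hA.le hA2
      calc (Real.sqrt 2)⁻¹ * Real.sqrt ((1 + δ ^ 2) + (1 - δ ^ 2) * c)
          < (Real.sqrt 2)⁻¹ * Real.sqrt 2 :=
            (mul_lt_mul_iff_right₀ (inv_pos.mpr hs2)).mpr h1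
        _ = 1 := by field_simp
    refine ⟨⟨hrmpos, hrmlt⟩, ⟨hrppos, hrplt⟩, ?_⟩
    have hinv2 : ((Real.sqrt 2)⁻¹) ^ 2 = 1/2 := by
      rw [inv_pow, Real.sq_sqrt (by norm_num : (0:ℝ) ≤ 2)]
      norm_num
    have hnat : ∀ x : ℝ, x ^ (2:ℝ) = x ^ (2:ℕ) := fun x => by
      rw [← Real.rpow_natCast]; norm_num
    have hrp2 : rp ω ^ (2:ℝ) = (1/2) * ((1 + δ ^ 2) + (1 - δ ^ 2) * c) := by
      rw [hnat, hrp, mul_pow, Real.sq_sqrt hA.le, hinv2]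
    have hrm2 : rm ω ^ (2:ℝ) = (1/2) * (1 - δ)^2 * (1 - c) := by
      rw [hnat, hrm, mul_pow, mul_pow, Real.sq_sqrt h1c.le, hinv2]
    rw [hrp2, hrm2]
    nlinarith [mul_pos (mul_pos hδ0 (show (0:ℝ) < 1 - δ by linarith)) h1c]
  -- the function F
  set G : ℝ → Ω → ℝ := fun α ω => rp ω ^ α + rm ω ^ α with hG
  set F : ℝ → ℝ := fun α => ∫ ω, G α ω ∂P with hF
  have hGmeas : ∀ α, 0 ≤ α → AEStronglyMeasurable (G α) P := by
    intro α hα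
    exact ((((Real.continuous_rpow_const hα).measurable.comp hrp_meas).add
      ((Real.continuous_rpow_const hα).measurable.comp hrm_meas)).aestronglyMeasurable)
  have hGbound : ∀ α, 0 ≤ α → ∀ᵐ ω ∂P, ‖G α ω‖ ≤ 2 := by
    intro α hα
    filter_upwards [key] with ω ⟨⟨hm0, hm1⟩, ⟨hp0, hp1⟩, _⟩
    have h1 : rp ω ^ α ≤ 1 := Real.rpow_le_one hp0.le hp1.le hα
    have h2 : rm ω ^ α ≤ 1 := Real.rpow_le_one hm0.le hm1.le hα
    have h3 : 0 ≤ rp ω ^ α := Real.rpow_nonneg hp0.le α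
    have h4 : 0 ≤ rm ω ^ α := Real.rpow_nonneg hm0.le α
    simp only [hG]
    rw [Real.norm_eq_abs, abs_of_nonneg (by linarith)]
    linarith
  have hGint : ∀ α, 0 ≤ α → Integrable (G α) P := by
    intro α hα
    exact (integrable_const (2:ℝ)).mono' (hGmeas α hα) (hGbound α hα)
  -- F is strictly antitone on [0, ∞)
  have hSA : StrictAntiOn F (Ici 0) := by
    intro a ha b hb hab
    have hdiff : ∀ᵐ ω ∂P, 0 < G a ω - G b ω := by
      filter_upwards [key] with ω ⟨⟨hm0, hm1⟩, ⟨hp0, hp1⟩, _⟩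
      have h1 : rp ω ^ b < rp ω ^ a := Real.rpow_lt_rpow_of_exponent_gt hp0 hp1 hab
      have h2 : rm ω ^ b < rm ω ^ a := Real.rpow_lt_rpow_of_exponent_gt hm0 hm1 hab
      simp only [hG]; linarith
    have hpos : 0 < ∫ ω, (G a ω - G b ω) ∂P :=
      integral_pos_of_ae_pos P ((hGint a ha).sub (hGint b (le_trans ha hab.le))) hdiff
    rw [integral_sub (hGint a ha) (hGint b (le_trans ha hab.le))] at hpos
    simp only [hF]
    linarith
  -- continuity of F on [0,2]
  have hFcont : ContinuousOn F (Icc 0 2) := by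
    intro α₀ hα₀
    apply continuousWithinAt_of_dominated (bound := fun _ => (2:ℝ))
    · filter_upwards [self_mem_nhdsWithin] with α hα
      exact hGmeas α hα.1
    · filter_upwards [self_mem_nhdsWithin] with α hα
      exact hGbound α hα.1
    · exact integrable_const 2
    · filter_upwards [key] with ω ⟨⟨hm0, _⟩, ⟨hp0, _⟩, _⟩
      apply ContinuousWithinAt.add
      · exact (Real.continuousAt_const_rpow hp0.ne').continuousWithinAt
      · exact (Real.continuousAt_const_rpow hm0.ne').continuousWithinAt
  -- endpoint values
  have hF0 : F 0 = 2 := by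
    have : G 0 = fun _ => 2 := by
      funext ω; simp [hG, Real.rpow_zero]; norm_num
    simp only [hF, this, integral_const, measure_univ, ENNReal.toReal_one, probReal_univ, smul_eq_mul, one_mul]
  have hF2 : F 2 < 1 := by
    have hdiff : ∀ᵐ ω ∂P, 0 < 1 - G 2 ω := by
      filter_upwards [key] with ω ⟨_, _, hsq⟩
      simp only [hG]; linarith
    have hpos : 0 < ∫ ω, (1 - G 2 ω) ∂P :=
      integral_pos_of_ae_pos P ((integrable_const 1).sub (hGint 2 (by norm_num))) hdiff
    rw [integral_sub (integrable_const 1) (hGint 2 (by norm_num)), integral_const,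
      probReal_univ] at hpos
    simp only [hF]
    simp at hpos
    linarith
  -- IVT
  have hIVT := intermediate_value_Ioo' (by norm_num : (0:ℝ) ≤ 2) hFcont
  have h1mem : (1:ℝ) ∈ Ioo (F 2) (F 0) := ⟨hF2, by rw [hF0]; norm_num⟩
  obtain ⟨α, hαmem, hFα⟩ := hIVT h1mem
  refine ⟨α, hαmem, hFα, ?_, ?_⟩
  · intro α' hα' h1
    exact hSA.injOn (mem_Ici.mpr hα'.1.le) (mem_Ici.mpr hαmem.1.le) (h1.trans hFα.symm)
  · intro γ hγ
    have hlt : α < α * γ := lt_mul_of_one_lt_right hαmem.1 hγ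
    have := hSA (mem_Ici.mpr hαmem.1.le)
      (mem_Ici.mpr (mul_pos hαmem.1 (by linarith : (0:ℝ) < γ)).le) hlt
    rw [hFα] at this
    exact this
end

section
/- Absolute continuity with respect to Haar measure (abstract form of Lemma 3.5): Let d ≥ 3. Suppose U₁, U₂ are random elements with values in the subgroup SO(d−1) of SO(d) fixing e_d and ψ* is a random angle with values in [0,π], such that U₁, U₂, ψ* are independent, ψ* has a continuous probability density which is strictly positive on (0,π), and the law of U₁ Z_{ψ*} U₂ is the normalized Haar measure on SO(d). Let ψ̃ be a random variable with values in (0,π) whose law has a density with respect to Lebesgue measure, with ψ̃ independent of (U₁, U₂). Then the law of the random rotation U₁ Z_{ψ̃} U₂ is absolutely continuous with respect to the Haar measure on SO(d). -/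
open MeasureTheory ProbabilityTheory Matrix Real Set

noncomputable instance matMeasurableSpace {d : ℕ} :
    MeasurableSpace (Matrix (Fin d) (Fin d) ℝ) :=
  inferInstanceAs (MeasurableSpace (Fin d → Fin d → ℝ))

/-- The "last" standard unit vector `e_d = (0,…,0,1)` of `ℝ^d`. -/
def eLast (d : ℕ) : Fin d → ℝ := fun i => if (i : ℕ) = d - 1 then 1 else 0

/-- Membership in the subgroup `SO(d-1)` of `SO(d)` fixing `e_d`. -/
def memSOfix (d : ℕ) (A : Matrix (Fin d) (Fin d) ℝ) : Prop :=
  A ∈ Matrix.specialOrthogonalGroup (Fin d) ℝ ∧ A *ᵥ eLast d = eLast d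

/-- The rotation `Z_ψ` by the angle `ψ` in the `e₁`–`e_d` plane. -/
noncomputable def Zmat (d : ℕ) (ψ : ℝ) : Matrix (Fin d) (Fin d) ℝ :=
  Matrix.of fun i j =>
    if (i : ℕ) = 0 ∧ (j : ℕ) = 0 then Real.cos ψ
    else if (i : ℕ) = 0 ∧ (j : ℕ) = d - 1 then -Real.sin ψ
    else if (i : ℕ) = d - 1 ∧ (j : ℕ) = 0 then Real.sin ψ
    else if (i : ℕ) = d - 1 ∧ (j : ℕ) = d - 1 then Real.cos ψ
    else if i = j then 1 else 0

/-- **Absolute continuity with respect to Haar measure (abstract Lemma 3.5).** If the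
independent triple `(U₁, U₂, ψ*)` realizes the Haar measure on `SO(d)` as the law of
`U₁ Z_{ψ*} U₂` (with `ψ*` having a continuous density positive on `(0,π)`), and `ψ̃`
is a `(0,π)`-valued random angle with absolutely continuous law, independent of
`(U₁, U₂)`, then the law of `U₁ Z_{ψ̃} U₂` is absolutely continuous with respect to
the Haar measure on `SO(d)`. -/
theorem abs_continuity_wrt_haar
    {d : ℕ} (hd : 3 ≤ d)
    {Ω : Type*} [MeasurableSpace Ω] (P : Measure Ω) [IsProbabilityMeasure P]
    (𝔥 : Measure (Matrix (Fin d) (Fin d) ℝ)) [IsProbabilityMeasure 𝔥]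
    (h𝔥_supp : 𝔥 {A | A ∉ Matrix.specialOrthogonalGroup (Fin d) ℝ} = 0)
    (h𝔥_linv : ∀ G ∈ Matrix.specialOrthogonalGroup (Fin d) ℝ,
      Measure.map (fun A => G * A) 𝔥 = 𝔥)
    (h𝔥_rinv : ∀ G ∈ Matrix.specialOrthogonalGroup (Fin d) ℝ,
      Measure.map (fun A => A * G) 𝔥 = 𝔥)
    (U₁ U₂ : Ω → Matrix (Fin d) (Fin d) ℝ) (ψst ψt : Ω → ℝ)
    (hU₁_meas : Measurable U₁) (hU₂_meas : Measurable U₂)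
    (hψst_meas : Measurable ψst) (hψt_meas : Measurable ψt)
    (hU₁_mem : ∀ ω, memSOfix d (U₁ ω)) (hU₂_mem : ∀ ω, memSOfix d (U₂ ω))
    -- U₁, U₂, ψ* mutually independent
    (hindep₁ : IndepFun ψst (fun ω => (U₁ ω, U₂ ω)) P)
    (hindep₂ : IndepFun U₁ U₂ P)
    -- ψ* has a continuous density, strictly positive on (0,π)
    (hψst_range : ∀ ω, ψst ω ∈ Set.Icc 0 π)
    (hψst_density : ∃ f : ℝ → ℝ, ContinuousOn f (Set.Icc 0 π) ∧
      (∀ x ∈ Set.Ioo 0 π, 0 < f x) ∧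
      Measure.map ψst P
        = (volume.restrict (Set.Icc (0 : ℝ) π)).withDensity
            (fun x => ENNReal.ofReal (f x)))
    -- the law of U₁ Z_{ψ*} U₂ is the Haar measure on SO(d)
    (hhaar : Measure.map (fun ω => U₁ ω * Zmat d (ψst ω) * U₂ ω) P = 𝔥)
    -- ψ̃ takes values in (0,π), has absolutely continuous law
    (hψt_range : ∀ ω, ψt ω ∈ Set.Ioo 0 π)
    (hψt_ac : Measure.map ψt P ≪ (volume : Measure ℝ))
    -- ψ̃ independent of (U₁, U₂)
    (hindep₃ : IndepFun ψt (fun ω => (U₁ ω, U₂ ω)) P) :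
    Measure.map (fun ω => U₁ ω * Zmat d (ψt ω) * U₂ ω) P ≪ 𝔥 := by

  classical
  haveI : BorelSpace (Matrix (Fin d) (Fin d) ℝ) :=
    inferInstanceAs (BorelSpace (Fin d → Fin d → ℝ))
  -- continuity of ψ ↦ Z_ψ
  have hZcont : Continuous fun x : ℝ => Zmat d x := by
    apply continuous_matrix
    intro i j
    simp only [Zmat, Matrix.of_apply]
    refine Continuous.if_const _ Real.continuous_cos ?_
    refine Continuous.if_const _ Real.continuous_sin.neg ?_
    refine Continuous.if_const _ Real.continuous_sin ?_
    refine Continuous.if_const _ Real.continuous_cos ?_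
    exact Continuous.if_const _ continuous_const continuous_const
  haveI : SecondCountableTopology (Matrix (Fin d) (Fin d) ℝ) :=
    inferInstanceAs (SecondCountableTopology (Fin d → Fin d → ℝ))
  set Φ : ℝ × (Matrix (Fin d) (Fin d) ℝ × Matrix (Fin d) (Fin d) ℝ) → Matrix (Fin d) (Fin d) ℝ :=
    fun q => q.2.1 * Zmat d q.1 * q.2.2 with hΦdef
  have hΦcont : Continuous Φ :=
    ((continuous_fst.comp continuous_snd).matrix_mul
      (hZcont.comp continuous_fst)).matrix_mul (continuous_snd.comp continuous_snd)
  have hΦmeas : Measurable Φ := hΦcont.measurable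
  have hpair : Measurable fun ω => (U₁ ω, U₂ ω) := hU₁_meas.prodMk hU₂_meas
  -- the two laws, via independence and the product structure
  have key : ∀ ψ : Ω → ℝ, Measurable ψ → IndepFun ψ (fun ω => (U₁ ω, U₂ ω)) P →
      Measure.map (fun ω => U₁ ω * Zmat d (ψ ω) * U₂ ω) P
        = Measure.map Φ ((Measure.map ψ P).prod
            (Measure.map (fun ω => (U₁ ω, U₂ ω)) P)) := by
    intro ψ hψ hind
    rw [← (indepFun_iff_map_prod_eq_prod_map_map hψ.aemeasurable hpair.aemeasurable).mp hind,
      Measure.map_map hΦmeas (hψ.prodMk hpair)]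
    rfl
  -- absolute continuity of the angle laws
  have hac : Measure.map ψt P ≪ Measure.map ψst P := by
    obtain ⟨f, hfcont, hfpos, hfeq⟩ := hψst_density
    refine Measure.AbsolutelyContinuous.mk (fun s hs hs0 => ?_)
    rw [hfeq, withDensity_apply _ hs] at hs0
    have hfm : AEMeasurable (fun x => ENNReal.ofReal (f x))
        ((volume.restrict (Set.Icc 0 π)).restrict s) :=
      ENNReal.measurable_ofReal.comp_aemeasurable
        ((hfcont.aemeasurable measurableSet_Icc).restrict)
    have hg0 : ∀ᵐ x ∂((volume.restrict (Set.Icc 0 π)).restrict s),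
        ENNReal.ofReal (f x) = 0 := (lintegral_eq_zero_iff' hfm).mp hs0
    have h1 : ((volume.restrict (Set.Icc 0 π)).restrict s) (Set.Ioo 0 π) = 0 := by
      refine measure_mono_null (fun x hx => ?_) (ae_iff.mp hg0)
      exact (ENNReal.ofReal_pos.mpr (hfpos x hx)).ne'
    have h2 : (volume : Measure ℝ) (s ∩ Set.Ioo 0 π) = 0 := by
      rw [Measure.restrict_apply measurableSet_Ioo,
        Measure.restrict_apply (measurableSet_Ioo.inter hs)] at h1
      refine measure_mono_null (fun x hx => ?_) h1
      exact ⟨⟨hx.2, hx.1⟩, Set.Ioo_subset_Icc_self hx.2⟩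
    have h3 : Measure.map ψt P (Set.Ioo 0 π)ᶜ = 0 := by
      rw [Measure.map_apply hψt_meas measurableSet_Ioo.compl]
      have : ψt ⁻¹' (Set.Ioo 0 π)ᶜ = ∅ := by
        ext ω; simp [hψt_range ω]
      rw [this, measure_empty]
    have hs_sub : s ⊆ (s ∩ Set.Ioo 0 π) ∪ (Set.Ioo 0 π)ᶜ := by
      intro x hx
      by_cases hx' : x ∈ Set.Ioo 0 π
      · exact Or.inl ⟨hx, hx'⟩
      · exact Or.inr hx'
    refine le_antisymm ?_ zero_le
    calc Measure.map ψt P s ≤ Measure.map ψt P ((s ∩ Set.Ioo 0 π) ∪ (Set.Ioo 0 π)ᶜ) :=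
          measure_mono hs_sub
      _ ≤ Measure.map ψt P (s ∩ Set.Ioo 0 π) + Measure.map ψt P (Set.Ioo 0 π)ᶜ :=
          measure_union_le _ _
      _ = 0 := by rw [hψt_ac h2, h3, add_zero]
  haveI : IsProbabilityMeasure (Measure.map ψst P) :=
    Measure.isProbabilityMeasure_map hψst_meas.aemeasurable
  haveI : IsProbabilityMeasure (Measure.map (fun ω => (U₁ ω, U₂ ω)) P) :=
    Measure.isProbabilityMeasure_map hpair.aemeasurable
  rw [key ψt hψt_meas hindep₃, ← hhaar, key ψst hψst_meas hindep₁]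
  exact (hac.prod Measure.AbsolutelyContinuous.rfl).map hΦmeas
end

section
/- Convolution contraction under a Haar minorization: Let G be a compact Hausdorff, second-countable topological group with normalized Haar probability measure 𝔥, let c ∈ (0,1], and let β be a Borel probability measure on G with β(B) ≥ c 𝔥(B) for every Borel set B ⊆ G. Then for every f ∈ L²(G, 𝔥) with ∫_G f d𝔥 = 0, the function g ↦ ∫_G f(g x) β(dx) has L²(G, 𝔥)-norm at most (1−c) ‖f‖_{L²(G,𝔥)}. -/
open MeasureTheory
open scoped ENNReal

private lemma lintegral_sq_cauchy_schwarz {α : Type*} [MeasurableSpace α] (μ : Measure α)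
    {u : α → ℝ≥0∞} (hu : AEMeasurable u μ) :
    (∫⁻ a, u a ∂μ) ^ (2 : ℝ) ≤ μ Set.univ * ∫⁻ a, u a ^ (2 : ℝ) ∂μ := by
  have hpq : Real.HolderConjugate 2 2 := ⟨by norm_num, by norm_num, by norm_num⟩
  have h := ENNReal.lintegral_mul_le_Lp_mul_Lq μ hpq hu
    (aemeasurable_const (b := (1 : ℝ≥0∞)))
  simp only [Pi.mul_apply, mul_one, ENNReal.one_rpow, lintegral_const, one_mul] at h
  calc (∫⁻ a, u a ∂μ) ^ (2 : ℝ)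
      ≤ ((∫⁻ a, u a ^ (2:ℝ) ∂μ) ^ (1/(2:ℝ)) * (μ Set.univ) ^ (1/(2:ℝ))) ^ (2:ℝ) :=
        ENNReal.rpow_le_rpow h (by norm_num)
    _ = μ Set.univ * ∫⁻ a, u a ^ (2 : ℝ) ∂μ := by
        rw [ENNReal.mul_rpow_of_nonneg _ _ (by norm_num : (0:ℝ) ≤ 2),
          ← ENNReal.rpow_mul, ← ENNReal.rpow_mul]
        norm_num [mul_comm]

/-- **Convolution contraction under a Haar minorization.** Let `G` be a compact,
Hausdorff, second-countable topological group with normalized Haar probability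
measure `𝔥`, `c ∈ (0,1]`, and `β` a Borel probability measure with `β(B) ≥ c 𝔥(B)`
for all Borel `B`. Then for every mean-zero `f ∈ L²(G,𝔥)` the function
`g ↦ ∫ f(gx) β(dx)` has `L²`-norm at most `(1-c)‖f‖_{L²}`. -/
theorem convolution_contraction_of_minorization
    {G : Type*} [Group G] [TopologicalSpace G] [IsTopologicalGroup G]
    [CompactSpace G] [T2Space G] [SecondCountableTopology G]
    [MeasurableSpace G] [BorelSpace G]
    (𝔥 : Measure G) [𝔥.IsHaarMeasure] [IsProbabilityMeasure 𝔥]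
    (c : ℝ) (hc : c ∈ Set.Ioc (0 : ℝ) 1)
    (β : Measure G) [IsProbabilityMeasure β]
    (hβ : ∀ B : Set G, MeasurableSet B → ENNReal.ofReal c * 𝔥 B ≤ β B) :
    ∀ f : G → ℝ, MemLp f 2 𝔥 → (∫ g, f g ∂𝔥) = 0 →
      eLpNorm (fun g => ∫ x, f (g * x) ∂β) 2 𝔥
        ≤ ENNReal.ofReal (1 - c) * eLpNorm f 2 𝔥 := by
  obtain ⟨hc0, hc1⟩ := hc
  intro f hf hmean
  -- the Haar probability measure is also right invariant
  haveI hRI : 𝔥.IsMulRightInvariant := by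
    constructor
    intro g
    haveI : IsProbabilityMeasure (Measure.map (· * g) 𝔥) :=
      Measure.isProbabilityMeasure_map (measurable_mul_const g).aemeasurable
    exact Measure.isHaarMeasure_eq_of_isProbabilityMeasure _ 𝔥
  -- decompose β = ν + c • 𝔥
  have hle : (ENNReal.ofReal c) • 𝔥 ≤ β := by
    refine Measure.le_iff.2 fun s hs => ?_
    simpa using hβ s hs
  haveI : IsFiniteMeasure ((ENNReal.ofReal c) • 𝔥) := by
    constructor
    simp [ENNReal.smul_def, ENNReal.ofReal_lt_top, ENNReal.mul_lt_top]
  set ν : Measure G := β - (ENNReal.ofReal c) • 𝔥 with hνdef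
  haveI hνfin : IsFiniteMeasure ν := by
    constructor
    exact lt_of_le_of_lt (Measure.le_iff'.1 Measure.sub_le Set.univ)
      (measure_lt_top β Set.univ)
  have hνuniv : ν Set.univ = ENNReal.ofReal (1 - c) := by
    rw [hνdef, Measure.sub_apply MeasurableSet.univ hle]
    simp only [measure_univ, Measure.smul_apply, smul_eq_mul, mul_one]
    rw [ENNReal.ofReal_sub _ hc0.le, ENNReal.ofReal_one]
  have hβeq : β = ν + (ENNReal.ofReal c) • 𝔥 :=
    (Measure.sub_add_cancel_of_le hle).symm
  -- replace f by a strongly measurable representative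
  set f' : G → ℝ := hf.1.mk f with hf'def
  have hf'sm : StronglyMeasurable f' := hf.1.stronglyMeasurable_mk
  have hf'm : Measurable f' := hf'sm.measurable
  have hff' : f =ᵐ[𝔥] f' := hf.1.ae_eq_mk
  have hf2' : MemLp f' 2 𝔥 := hf.ae_eq hff'
  have hmean' : (∫ g, f' g ∂𝔥) = 0 := (integral_congr_ae hff').symm.trans hmean
  have hnorm' : eLpNorm f 2 𝔥 = eLpNorm f' 2 𝔥 := eLpNorm_congr_ae hff'
  -- Claim 1 : for a.e. g, the translates of f and f' agree β-a.e.
  obtain ⟨N, hNsub, hNmeas, hNnull⟩ :=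
    exists_measurable_superset_of_null (ae_iff.1 hff')
  have claim1 : ∀ᵐ g ∂𝔥, (fun x => f (g * x)) =ᵐ[β] fun x => f' (g * x) := by
    have hind : Measurable fun p : G × G => N.indicator (1 : G → ℝ≥0∞) (p.1 * p.2) :=
      (measurable_one.indicator hNmeas).comp measurable_mul
    have hzero : ∫⁻ g, ∫⁻ x, N.indicator (1 : G → ℝ≥0∞) (g * x) ∂β ∂𝔥 = 0 := by
      rw [lintegral_lintegral_swap hind.aemeasurable]
      have : ∀ x : G, ∫⁻ g, N.indicator (1 : G → ℝ≥0∞) (g * x) ∂𝔥 = 𝔥 N := fun x => by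
        rw [lintegral_mul_right_eq_self (N.indicator (1 : G → ℝ≥0∞)) x,
          lintegral_indicator_one hNmeas]
      simp [this, hNnull]
    have hFm : Measurable fun g => ∫⁻ x, N.indicator (1 : G → ℝ≥0∞) (g * x) ∂β :=
      hind.lintegral_prod_right'
    have h1 := (lintegral_eq_zero_iff hFm).1 hzero
    filter_upwards [h1] with g hg
    have : ∀ᵐ x ∂β, N.indicator (1 : G → ℝ≥0∞) (g * x) = 0 :=
      (lintegral_eq_zero_iff ((measurable_one.indicator hNmeas).comp
        (measurable_const_mul g))).1 hg
    filter_upwards [this] with x hx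
    have hgx : g * x ∉ N := by
      by_contra h
      simp [Set.indicator_of_mem h] at hx
    have : ¬ (g * x ∈ {y | ¬ f y = f' y}) := fun h => hgx (hNsub h)
    simpa using this
  -- Claim 2 : for a.e. g, the translate of f' is β-integrable
  have claim2 : ∀ᵐ g ∂𝔥, Integrable (fun x => f' (g * x)) β := by
    have hL1 : Integrable f' 𝔥 :=
      memLp_one_iff_integrable.1 (hf2'.mono_exponent (by norm_num))
    have hum : Measurable fun p : G × G => (‖f' (p.1 * p.2)‖₊ : ℝ≥0∞) :=
      (hf'm.comp measurable_mul).nnnorm.coe_nnreal_ennreal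
    have hItot : ∫⁻ g, ∫⁻ x, (‖f' (g * x)‖₊ : ℝ≥0∞) ∂β ∂𝔥 < ⊤ := by
      rw [lintegral_lintegral_swap hum.aemeasurable]
      have : ∀ x : G, ∫⁻ g, (‖f' (g * x)‖₊ : ℝ≥0∞) ∂𝔥
          = ∫⁻ g, (‖f' g‖₊ : ℝ≥0∞) ∂𝔥 := fun x =>
        lintegral_mul_right_eq_self (fun g => (‖f' g‖₊ : ℝ≥0∞)) x
      simp only [this, lintegral_const, measure_univ, mul_one]
      exact hL1.2
    have hFm : Measurable fun g => ∫⁻ x, (‖f' (g * x)‖₊ : ℝ≥0∞) ∂β :=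
      hum.lintegral_prod_right'
    filter_upwards [ae_lt_top hFm hItot.ne] with g hg
    exact ⟨(hf'sm.comp_measurable (measurable_const_mul g)).aestronglyMeasurable, hg⟩
  -- Claim 3 : a.e. identification of the convolution with the ν-part
  have claim3 : ∀ᵐ g ∂𝔥, (∫ x, f (g * x) ∂β) = ∫ x, f' (g * x) ∂ν := by
    filter_upwards [claim1, claim2] with g h1 h2
    have h2' : Integrable (fun x => f' (g * x)) (ν + (ENNReal.ofReal c) • 𝔥) := by
      rwa [← hβeq]
    obtain ⟨h2ν, h2s⟩ := integrable_add_measure.1 h2'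
    have h0 : (∫ x, f' (g * x) ∂𝔥) = 0 := by
      rw [integral_mul_left_eq_self f' g]; exact hmean'
    calc (∫ x, f (g * x) ∂β) = ∫ x, f' (g * x) ∂β := integral_congr_ae h1
      _ = ∫ x, f' (g * x) ∂(ν + (ENNReal.ofReal c) • 𝔥) := by rw [← hβeq]
      _ = (∫ x, f' (g * x) ∂ν) + ∫ x, f' (g * x) ∂((ENNReal.ofReal c) • 𝔥) :=
          integral_add_measure h2ν h2s
      _ = ∫ x, f' (g * x) ∂ν := by
          rw [integral_smul_measure, h0, smul_zero, add_zero]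
  rw [eLpNorm_congr_ae claim3, hnorm', ← hνuniv]
  -- main estimate
  have hum : Measurable fun p : G × G => (‖f' (p.1 * p.2)‖₊ : ℝ≥0∞) :=
    (hf'm.comp measurable_mul).nnnorm.coe_nnreal_ennreal
  have hu2m : Measurable fun p : G × G => (‖f' (p.1 * p.2)‖₊ : ℝ≥0∞) ^ (2:ℝ) :=
    ENNReal.continuous_rpow_const.measurable.comp hum
  rw [eLpNorm_eq_lintegral_rpow_enorm_toReal two_ne_zero ENNReal.ofNat_ne_top,
    eLpNorm_eq_lintegral_rpow_enorm_toReal two_ne_zero ENNReal.ofNat_ne_top]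
  simp only [ENNReal.toReal_ofNat]
  set A : ℝ≥0∞ := ∫⁻ g, (‖f' g‖₊ : ℝ≥0∞) ^ (2:ℝ) ∂𝔥 with hA
  have key : (∫⁻ g, (‖(∫ x, f' (g * x) ∂ν)‖₊ : ℝ≥0∞) ^ (2:ℝ) ∂𝔥)
      ≤ ν Set.univ ^ (2:ℝ) * A := by
    have step1 : ∀ g : G, (‖(∫ x, f' (g * x) ∂ν)‖₊ : ℝ≥0∞) ^ (2:ℝ)
        ≤ ν Set.univ * ∫⁻ x, (‖f' (g * x)‖₊ : ℝ≥0∞) ^ (2:ℝ) ∂ν := by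
      intro g
      refine le_trans (ENNReal.rpow_le_rpow
        (enorm_integral_le_lintegral_enorm _) (by norm_num)) ?_
      exact lintegral_sq_cauchy_schwarz ν
        ((hf'm.comp (measurable_const_mul g)).nnnorm.coe_nnreal_ennreal.aemeasurable)
    calc (∫⁻ g, (‖(∫ x, f' (g * x) ∂ν)‖₊ : ℝ≥0∞) ^ (2:ℝ) ∂𝔥)
        ≤ ∫⁻ g, ν Set.univ * ∫⁻ x, (‖f' (g * x)‖₊ : ℝ≥0∞) ^ (2:ℝ) ∂ν ∂𝔥 :=
          lintegral_mono step1
      _ = ν Set.univ * ∫⁻ g, ∫⁻ x, (‖f' (g * x)‖₊ : ℝ≥0∞) ^ (2:ℝ) ∂ν ∂𝔥 :=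
          lintegral_const_mul _ hu2m.lintegral_prod_right'
      _ = ν Set.univ * ∫⁻ x, ∫⁻ g, (‖f' (g * x)‖₊ : ℝ≥0∞) ^ (2:ℝ) ∂𝔥 ∂ν := by
          rw [lintegral_lintegral_swap hu2m.aemeasurable]
      _ = ν Set.univ ^ (2:ℝ) * A := by
          have : ∀ x : G, ∫⁻ g, (‖f' (g * x)‖₊ : ℝ≥0∞) ^ (2:ℝ) ∂𝔥 = A := fun x =>
            lintegral_mul_right_eq_self (fun g => (‖f' g‖₊ : ℝ≥0∞) ^ (2:ℝ)) x
          simp only [this, lintegral_const]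
          rw [show ((2:ℝ)) = ((2:ℕ):ℝ) by norm_num, ENNReal.rpow_natCast]
          ring
  calc (∫⁻ g, (‖(∫ x, f' (g * x) ∂ν)‖₊ : ℝ≥0∞) ^ (2:ℝ) ∂𝔥) ^ (1/(2:ℝ))
      ≤ (ν Set.univ ^ (2:ℝ) * A) ^ (1/(2:ℝ)) := ENNReal.rpow_le_rpow key (by norm_num)
    _ = ν Set.univ * A ^ (1/(2:ℝ)) := by
        rw [ENNReal.mul_rpow_of_nonneg _ _ (by norm_num : (0:ℝ) ≤ 1/2),
          ← ENNReal.rpow_mul]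
        norm_num
end

section
/- Continuity of Lévy-measure tails of a full stable law (Appendix Lemma B.2): Let d ≥ 2, α ∈ (0,2), and let Λ be a finite Borel measure on the unit sphere S^{d−1} whose support spans ℝ^d (fullness). Define the Lévy measure φ on ℝ^d ∖ {0} as the pushforward under the map (θ, r) ↦ r θ of the product of Λ with the measure on (0,∞) having density r ↦ α k_α r^{−α−1}, where k_α = 2Γ(α) sin(απ/2)/π. For x ∈ ℝ^d set B_x = { y ∈ ℝ^d : x · y > 1 }. Then the map x ↦ φ(B_x) is continuous on ℝ^d ∖ {0}. -/
open MeasureTheory Matrix Real Set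

/-- The unit sphere `S^{d-1}` in `ℝ^d`. -/
def Sph (d : ℕ) : Set (Fin d → ℝ) := {v | v ⬝ᵥ v = 1}

/-- The constant `k_α = 2Γ(α) sin(απ/2)/π`. -/
noncomputable def kconst (α : ℝ) : ℝ := 2 * Real.Gamma α * Real.sin (α * π / 2) / π

/-- The radial measure on `(0,∞)` with density `r ↦ α k_α r^{-α-1}`. -/
noncomputable def radMeasure (α : ℝ) : Measure ℝ :=
  (volume.restrict (Set.Ioi (0 : ℝ))).withDensity
    (fun r => ENNReal.ofReal (α * kconst α * r ^ (-α - 1)))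

/-- The Lévy measure of the `α`-stable law with spectral measure `Λ` on `S^{d-1}`:
the pushforward of `Λ ⊗ (α k_α r^{-α-1} dr)` under `(θ, r) ↦ r θ`. -/
noncomputable def levyOf {d : ℕ} (α : ℝ) (Λ : Measure ↥(Sph d)) : Measure (Fin d → ℝ) :=
  Measure.map (fun p : ↥(Sph d) × ℝ => p.2 • (p.1 : Fin d → ℝ)) (Λ.prod (radMeasure α))

lemma kconst_pos {α : ℝ} (h0 : 0 < α) (h2 : α < 2) : 0 < kconst α := by
  have hΓ := Real.Gamma_pos_of_pos h0
  have hs : 0 < Real.sin (α * π / 2) := by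
    apply Real.sin_pos_of_pos_of_lt_pi
    · positivity
    · nlinarith [Real.pi_pos]
  have := Real.pi_pos
  unfold kconst
  positivity

lemma radMeasure_tail {α : ℝ} (h0 : 0 < α) (h2 : α < 2) (c : ℝ) :
    radMeasure α {r : ℝ | 1 < r * c} = ENNReal.ofReal (kconst α * (max c 0) ^ α) := by
  have hk := kconst_pos h0 h2
  have hms : MeasurableSet {r : ℝ | 1 < r * c} := by
    have : Continuous fun r : ℝ => r * c := by continuity
    exact (isOpen_lt continuous_const this).measurableSet
  rw [radMeasure, withDensity_apply _ hms, Measure.restrict_restrict hms]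
  rcases le_or_gt c 0 with hc | hc
  · have he : {r : ℝ | 1 < r * c} ∩ Set.Ioi 0 = ∅ := by
      ext r
      simp only [Set.mem_inter_iff, Set.mem_setOf_eq, Set.mem_Ioi, Set.mem_empty_iff_false,
        iff_false, not_and]
      intro h1 h2'
      nlinarith
    rw [he, max_eq_right hc, Real.zero_rpow h0.ne', mul_zero]
    simp
  · have hset : {r : ℝ | 1 < r * c} = Set.Ioi c⁻¹ := by
      ext r
      simp only [Set.mem_setOf_eq, Set.mem_Ioi]
      rw [inv_lt_iff_one_lt_mul₀ hc]
    have hsub : Set.Ioi c⁻¹ ∩ Set.Ioi (0:ℝ) = Set.Ioi c⁻¹ := by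
      rw [Set.inter_eq_left]
      intro r hr
      exact lt_trans (inv_pos.mpr hc) hr
    rw [hset, hsub, max_eq_left hc.le]
    have hci : (0:ℝ) < c⁻¹ := inv_pos.mpr hc
    have hInt : IntegrableOn (fun r : ℝ => α * kconst α * r ^ (-α - 1)) (Set.Ioi c⁻¹) :=
      (integrableOn_Ioi_rpow_of_lt (by linarith) hci).const_mul _
    rw [← ofReal_integral_eq_lintegral_ofReal hInt]
    · congr 1
      rw [integral_const_mul, integral_Ioi_rpow_of_lt (by linarith) hci]
      have h1 : -α - 1 + 1 = -α := by ring
      rw [h1]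
      rw [Real.inv_rpow hc.le, Real.rpow_neg hc.le, inv_inv]
      field_simp
    · filter_upwards [ae_restrict_mem measurableSet_Ioi] with r hr
      have : (0:ℝ) < r := lt_trans hci hr
      positivity

lemma sph_coord_le {d : ℕ} (θ : ↥(Sph d)) (i : Fin d) : |(θ : Fin d → ℝ) i| ≤ 1 := by
  have h := θ.2
  simp only [Sph, Set.mem_setOf_eq, dotProduct] at h
  have hle : (θ : Fin d → ℝ) i * (θ : Fin d → ℝ) i ≤ 1 := by
    rw [← h]
    exact Finset.single_le_sum (f := fun j => (θ : Fin d → ℝ) j * (θ : Fin d → ℝ) j)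
      (fun j _ => mul_self_nonneg _) (Finset.mem_univ i)
  exact abs_le_one_iff_mul_self_le_one.mpr hle

lemma dot_bound {d : ℕ} (x : Fin d → ℝ) (θ : ↥(Sph d)) :
    |x ⬝ᵥ (θ : Fin d → ℝ)| ≤ d * ‖x‖ := by
  calc |x ⬝ᵥ (θ : Fin d → ℝ)| ≤ ∑ i, |x i * (θ : Fin d → ℝ) i| :=
        Finset.abs_sum_le_sum_abs _ _
    _ ≤ ∑ _i : Fin d, ‖x‖ := by
        apply Finset.sum_le_sum
        intro i _
        rw [abs_mul]
        calc |x i| * |(θ : Fin d → ℝ) i| ≤ |x i| * 1 :=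
              mul_le_mul_of_nonneg_left (sph_coord_le θ i) (abs_nonneg _)
          _ = ‖x i‖ := by rw [mul_one, Real.norm_eq_abs]
          _ ≤ ‖x‖ := norm_le_pi_norm x i
    _ = d * ‖x‖ := by simp [Finset.sum_const, nsmul_eq_mul]

lemma levy_eval {d : ℕ} {α : ℝ} (h0 : 0 < α) (h2 : α < 2) (Λ : Measure ↥(Sph d))
    [IsFiniteMeasure Λ] (x : Fin d → ℝ) :
    levyOf α Λ {y | 1 < x ⬝ᵥ y}
      = ∫⁻ θ, ENNReal.ofReal (kconst α * (max (x ⬝ᵥ (θ : Fin d → ℝ)) 0) ^ α) ∂Λ := by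
  have hσ : SigmaFinite (radMeasure α) := by rw [radMeasure]; infer_instance
  have hcont : Continuous fun y : Fin d → ℝ => x ⬝ᵥ y :=
    continuous_const.dotProduct continuous_id
  have hms : MeasurableSet {y : Fin d → ℝ | 1 < x ⬝ᵥ y} :=
    (isOpen_lt continuous_const hcont).measurableSet
  have hf : Measurable fun p : ↥(Sph d) × ℝ => p.2 • (p.1 : Fin d → ℝ) :=
    (continuous_snd.smul (continuous_subtype_val.comp continuous_fst)).measurable
  rw [levyOf, Measure.map_apply hf hms, Measure.prod_apply (hf hms)]
  refine lintegral_congr fun θ => ?_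
  have hpre : (Prod.mk θ ⁻¹'
      ((fun p : ↥(Sph d) × ℝ => p.2 • (p.1 : Fin d → ℝ)) ⁻¹' {y | 1 < x ⬝ᵥ y}))
      = {r : ℝ | 1 < r * (x ⬝ᵥ (θ : Fin d → ℝ))} := by
    ext r
    simp [dotProduct_smul, smul_eq_mul, mul_comm]
  rw [hpre, radMeasure_tail h0 h2]

/-- **Continuity of Lévy-measure tails of a full stable law (Lemma B.2).** If `Λ` is a
finite spectral measure on `S^{d-1}` whose support spans `ℝ^d`, then `x ↦ φ(B_x)`,
with `B_x = {y : x·y > 1}` and `φ` the associated `α`-stable Lévy measure, is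
continuous on `ℝ^d ∖ {0}`. -/
theorem levy_tail_continuous
    {d : ℕ} (hd : 2 ≤ d) (α : ℝ) (hα : α ∈ Set.Ioo (0 : ℝ) 2)
    (Λ : Measure ↥(Sph d)) [IsFiniteMeasure Λ]
    (hfull : ∀ v : Fin d → ℝ, v ≠ 0 → Λ {θ : ↥(Sph d) | ¬ v ⬝ᵥ (θ : Fin d → ℝ) = 0} ≠ 0) :
    ContinuousOn (fun x : Fin d → ℝ => levyOf α Λ {y | 1 < x ⬝ᵥ y})
      {x : Fin d → ℝ | x ≠ 0} := by
  obtain ⟨h0, h2⟩ := hα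
  have hk := kconst_pos h0 h2
  have hrpow : Continuous fun t : ℝ => t ^ α := Real.continuous_rpow_const h0.le
  -- the integrand
  set G : (Fin d → ℝ) → ↥(Sph d) → ℝ :=
    fun x θ => kconst α * (max (x ⬝ᵥ (θ : Fin d → ℝ)) 0) ^ α with hG
  have hGnn : ∀ x θ, 0 ≤ G x θ := by
    intro x θ
    exact mul_nonneg hk.le (Real.rpow_nonneg (le_max_right _ _) _)
  have hGle : ∀ (C : ℝ) (x : Fin d → ℝ) (θ : ↥(Sph d)), (d : ℝ) * ‖x‖ ≤ C →
      G x θ ≤ kconst α * C ^ α := by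
    intro C x θ hC
    apply mul_le_mul_of_nonneg_left _ hk.le
    apply Real.rpow_le_rpow (le_max_right _ _) _ h0.le
    refine le_trans (max_le (le_trans (le_abs_self _) (dot_bound x θ)) ?_) hC
    positivity
  have hGcont : ∀ x : Fin d → ℝ, Continuous (G x) := by
    intro x
    exact continuous_const.mul (hrpow.comp
      (((continuous_const.dotProduct continuous_id).comp continuous_subtype_val).max
        continuous_const))
  have hGint : ∀ x : Fin d → ℝ, Integrable (G x) Λ := by
    intro x
    refine (integrable_const (kconst α * ((d : ℝ) * ‖x‖) ^ α)).mono'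
      (hGcont x).aestronglyMeasurable ?_
    filter_upwards with θ
    rw [Real.norm_eq_abs, abs_of_nonneg (hGnn x θ)]
    exact hGle _ x θ le_rfl
  have key : ∀ x : Fin d → ℝ, levyOf α Λ {y | 1 < x ⬝ᵥ y}
      = ENNReal.ofReal (∫ θ, G x θ ∂Λ) := by
    intro x
    rw [levy_eval h0 h2, ofReal_integral_eq_lintegral_ofReal (hGint x)]
    filter_upwards with θ using hGnn x θ
  simp only [key]
  refine (ENNReal.continuous_ofReal.comp ?_).continuousOn
  rw [continuous_iff_continuousAt]
  intro x₀
  apply continuousAt_of_dominated (bound := fun _ => kconst α * ((d : ℝ) * (‖x₀‖ + 1)) ^ α)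
  · filter_upwards with x using (hGcont x).aestronglyMeasurable
  · have hev : ∀ᶠ x in nhds x₀, ‖x‖ < ‖x₀‖ + 1 :=
      (continuous_norm.tendsto x₀).eventually_lt_const (by linarith)
    filter_upwards [hev] with x hx
    filter_upwards with θ
    rw [Real.norm_eq_abs, abs_of_nonneg (hGnn x θ)]
    refine hGle _ x θ ?_
    have : (0:ℝ) ≤ (d : ℝ) := Nat.cast_nonneg _
    nlinarith [norm_nonneg x]
  · exact integrable_const _
  · filter_upwards with θ
    exact (continuous_const.mul (hrpow.comp
      (((continuous_id.dotProduct continuous_const)).max continuous_const))).continuousAt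
end
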